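/- (Key identity for Reimer interpolation) Let A, B ⊆ {0,1}^n be increasing events and let F(x,y) be the indicator that (A,B) occurs disjointly on (x,y). Then for every i ∈ [n] and all x, y ∈ {0,1}^n, −∇_{ii}F(x,y) = D_iF(x,y), where D_iF(x,y) = [F(x^i,y_i) − F(x_i,y_i)]·[F(x_i,y^i) − F(x_i,y_i)]. -/
import Mathlib


open Finset

/-- `(x, I)` is a witness for `A`: every configuration agreeing with `x` on `I` lies in `A`. -/
def IsWitness {n : ℕ} (A : Set (Fin n → Bool)) (x : Fin n → Bool) (I : Finset (Fin n)) : Prop :=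
  ∀ y : Fin n → Bool, (∀ i ∈ I, y i = x i) → y ∈ A

/-- `(A, B)` occurs disjointly on `(x, y)`: there are disjoint witness sets `I` for `A` in `x`
and `J` for `B` in `y`. -/
def OccursDisjointly {n : ℕ} (A B : Set (Fin n → Bool)) (x y : Fin n → Bool) : Prop :=
  ∃ I J : Finset (Fin n), Disjoint I J ∧ IsWitness A x I ∧ IsWitness B y J

/-- An event is increasing if it is upward closed in the coordinatewise order. -/
def IncreasingEvent {n : ℕ} (A : Set (Fin n → Bool)) : Prop :=
  ∀ x y : Fin n → Bool, (∀ i, x i ≤ y i) → x ∈ A → y ∈ A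

/-- Coordinatewise colour flip. -/
def flipConf {n : ℕ} (x : Fin n → Bool) : Fin n → Bool := fun i => !(x i)

/-- `B̄ = {x̄ : x ∈ B}`. -/
def flipSet {n : ℕ} (B : Set (Fin n → Bool)) : Set (Fin n → Bool) := flipConf '' B

open Function

attribute [local instance] Classical.propDecidable

/-- Indicator of the event that `(A,B)` occurs disjointly on `(x,y)`. -/
noncomputable def indDisj {n : ℕ} (A B : Set (Fin n → Bool)) (x y : Fin n → Bool) : ℝ :=
  if OccursDisjointly A B x y then 1 else 0

/-- Second-order discrete derivative `∇_{ii}`. -/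
def nablaII {n : ℕ} (F : (Fin n → Bool) → (Fin n → Bool) → ℝ) (i : Fin n)
    (x y : Fin n → Bool) : ℝ :=
  F (update x i true) (update y i true) + F (update x i false) (update y i false)
    - F (update x i true) (update y i false) - F (update x i false) (update y i true)

/-- `D_i F`. -/
def Dop {n : ℕ} (F : (Fin n → Bool) → (Fin n → Bool) → ℝ) (i : Fin n)
    (x y : Fin n → Bool) : ℝ :=
  (F (update x i true) (update y i false) - F (update x i false) (update y i false))
    * (F (update x i false) (update y i true) - F (update x i false) (update y i false))

lemma isWitness_congr {n : ℕ} {A : Set (Fin n → Bool)} {x x' : Fin n → Bool}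
    {I : Finset (Fin n)} (h : ∀ j ∈ I, x j = x' j) (hw : IsWitness A x I) :
    IsWitness A x' I := fun z hz => hw z fun j hj => (hz j hj).trans (h j hj).symm

lemma isWitness_mono {n : ℕ} {A : Set (Fin n → Bool)} (hA : IncreasingEvent A)
    {x : Fin n → Bool} {i : Fin n} {I : Finset (Fin n)}
    (hw : IsWitness A (update x i false) I) : IsWitness A (update x i true) I := by
  intro z hz
  apply hA (update z i false) z (fun j => by
    by_cases hj : j = i <;> simp [update, hj])
  apply hw
  intro j hj
  by_cases hji : j = i
  · simp [hji, update]
  · simp only [update, hji, if_neg hji]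
    have := hz j hj
    simpa [update, hji] using this

lemma occ_mono_x {n : ℕ} {A B : Set (Fin n → Bool)} (hA : IncreasingEvent A)
    {x y : Fin n → Bool} {i : Fin n}
    (h : OccursDisjointly A B (update x i false) y) :
    OccursDisjointly A B (update x i true) y := by
  obtain ⟨I, J, hd, hI, hJ⟩ := h
  exact ⟨I, J, hd, isWitness_mono hA hI, hJ⟩

lemma occ_mono_y {n : ℕ} {A B : Set (Fin n → Bool)} (hB : IncreasingEvent B)
    {x y : Fin n → Bool} {i : Fin n}
    (h : OccursDisjointly A B x (update y i false)) :
    OccursDisjointly A B x (update y i true) := by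
  obtain ⟨I, J, hd, hI, hJ⟩ := h
  exact ⟨I, J, hd, hI, isWitness_mono hB hJ⟩

lemma occ_split {n : ℕ} {A B : Set (Fin n → Bool)}
    {x y : Fin n → Bool} {i : Fin n}
    (h : OccursDisjointly A B (update x i true) (update y i true)) :
    OccursDisjointly A B (update x i true) (update y i false) ∨
      OccursDisjointly A B (update x i false) (update y i true) := by
  obtain ⟨I, J, hd, hI, hJ⟩ := h
  by_cases hiJ : i ∈ J
  · have hiI : i ∉ I := fun hiI => (Finset.disjoint_left.mp hd hiI) hiJ
    right
    refine ⟨I, J, hd, isWitness_congr (fun j hj => ?_) hI, hJ⟩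
    have : j ≠ i := fun hji => hiI (hji ▸ hj)
    simp [update, this]
  · left
    refine ⟨I, J, hd, hI, isWitness_congr (fun j hj => ?_) hJ⟩
    have : j ≠ i := fun hji => hiJ (hji ▸ hj)
    simp [update, this]

/-- Key identity for the Reimer interpolation: `-∇_{ii}F = D_i F` for the indicator `F`
of disjoint occurrence of increasing events. -/
theorem neg_nablaII_eq_D {n : ℕ} (A B : Set (Fin n → Bool))
    (hA : IncreasingEvent A) (hB : IncreasingEvent B) (i : Fin n) (x y : Fin n → Bool) :
    -nablaII (indDisj A B) i x y = Dop (indDisj A B) i x y := by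
  have hbc := @occ_mono_x n A B hA x (update y i false) i
  have hbd := @occ_mono_y n A B hB (update x i false) y i
  have hca := @occ_mono_y n A B hB (update x i true) y i
  have hda := @occ_mono_x n A B hA x (update y i true) i
  have hsplit := @occ_split n A B x y i
  unfold nablaII Dop indDisj
  by_cases ha : OccursDisjointly A B (update x i true) (update y i true) <;>
    by_cases hb : OccursDisjointly A B (update x i false) (update y i false) <;>
    by_cases hc : OccursDisjointly A B (update x i true) (update y i false) <;>
    by_cases hd : OccursDisjointly A B (update x i false) (update y i true) <;>
    simp_all
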